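/- Let m > 0, 0 ≤ x₀ < m, let 𝒢_bd be the set of measurable g : ℝ → ℝ with 𝔼[γ(X)·g(X)] ≥ x₀ and 0 ≤ g(X) ≤ m almost surely, and set q' := inf{VaR_p(g(X)) : g ∈ 𝒢_bd}. Assume q' > 0 and ℙ(γ(X) ≤ VaR_p(γ(X))) = p. Then, with c := VaR_p(γ(X)), the minimization of VaR_p(g(X)) over 𝒢_bd admits a ℙ-almost surely unique solution, given by g*(X) = m·𝟙_{γ(X) > c} + q'·𝟙_{γ(X) ≤ c}. -/

import Mathlib

open MeasureTheory Filter
open scoped ENNReal Topology Classical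

noncomputable def VaR {Ω : Type*} [MeasurableSpace Ω] (P : Measure Ω) (p : ℝ) (Y : Ω → ℝ) : ℝ :=
  sInf {x : ℝ | p ≤ (P {ω | Y ω ≤ x}).toReal}

noncomputable def ES {Ω : Type*} [MeasurableSpace Ω] (P : Measure Ω) (p : ℝ) (Y : Ω → ℝ) : ℝ :=
  (1 - p)⁻¹ * ∫ u in p..(1 : ℝ), VaR P u Y

/-- The probability space is atomless. -/
def Atomless {Ω : Type*} [MeasurableSpace Ω] (P : Measure Ω) : Prop :=
  ∀ s : Set Ω, MeasurableSet s → 0 < P s →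
    ∃ t, t ⊆ s ∧ MeasurableSet t ∧ 0 < P t ∧ P t < P s

/-- The (topological) support of a measure on ℝ. -/
def msupport (μ : Measure ℝ) : Set ℝ :=
  {x | ∀ ε > 0, 0 < μ (Set.Ioo (x - ε) (x + ε))}

/-- The distribution `μ` has a density (w.r.t. Lebesgue measure) which is positive
on the support of `μ`. -/
def HasPositiveDensityOnSupport (μ : Measure ℝ) : Prop :=
  ∃ f : ℝ → ℝ, Measurable f ∧
    μ = MeasureTheory.volume.withDensity (fun x => ENNReal.ofReal (f x)) ∧
    ∀ x ∈ msupport μ, 0 < f x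

/-- The distribution `μ` has a density (w.r.t. Lebesgue measure) which is decreasing
(and positive) on the support of `μ`. -/
def HasDecreasingDensityOnSupport (μ : Measure ℝ) : Prop :=
  ∃ f : ℝ → ℝ, Measurable f ∧
    μ = MeasureTheory.volume.withDensity (fun x => ENNReal.ofReal (f x)) ∧
    AntitoneOn f (msupport μ) ∧ ∀ x ∈ msupport μ, 0 < f x

/-- Membership in the admissible set 𝒢_cm (complete market): measurable `g` with
budget constraint `𝔼[γ(X)·g(X)] ≥ x₀`. -/
def memGcm {Ω : Type*} [MeasurableSpace Ω] (P : Measure Ω) (X : Ω → ℝ) (γ : ℝ → ℝ)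
    (x₀ : ℝ) (g : ℝ → ℝ) : Prop :=
  Measurable g ∧ Integrable (fun ω => γ (X ω) * g (X ω)) P ∧
    x₀ ≤ ∫ ω, γ (X ω) * g (X ω) ∂P

/-- Membership in the admissible set 𝒢_ns (no short-selling):
`𝔼[γ(X)·g(X)] ≥ x₀` and `0 ≤ g(X) ≤ X` a.s. -/
def memGns {Ω : Type*} [MeasurableSpace Ω] (P : Measure Ω) (X : Ω → ℝ) (γ : ℝ → ℝ)
    (x₀ : ℝ) (g : ℝ → ℝ) : Prop :=
  Measurable g ∧ Integrable (fun ω => γ (X ω) * g (X ω)) P ∧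
    x₀ ≤ ∫ ω, γ (X ω) * g (X ω) ∂P ∧
    (∀ᵐ ω ∂P, 0 ≤ g (X ω) ∧ g (X ω) ≤ X ω)

/-- Membership in the admissible set 𝒢_bd (bounded positions):
`𝔼[γ(X)·g(X)] ≥ x₀` and `0 ≤ g(X) ≤ m` a.s. -/
def memGbd {Ω : Type*} [MeasurableSpace Ω] (P : Measure Ω) (X : Ω → ℝ) (γ : ℝ → ℝ)
    (x₀ m : ℝ) (g : ℝ → ℝ) : Prop :=
  Measurable g ∧ Integrable (fun ω => γ (X ω) * g (X ω)) P ∧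
    x₀ ≤ ∫ ω, γ (X ω) * g (X ω) ∂P ∧
    (∀ᵐ ω ∂P, 0 ≤ g (X ω) ∧ g (X ω) ≤ m)

section AuxLemmas

set_option linter.unusedSectionVars false

variable {Ω : Type*} [MeasurableSpace Ω] (P : Measure Ω) [IsProbabilityMeasure P]

lemma aux_VaR_eq {p : ℝ} (hp0 : 0 < p) {Z : Ω → ℝ} {a : ℝ}
    (h1 : p ≤ (P {ω | Z ω ≤ a}).toReal)
    (h2 : ∀ x, x < a → P {ω | Z ω ≤ x} = 0) : VaR P p Z = a := by
  apply IsLeast.csInf_eq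
  refine ⟨h1, fun b hb => ?_⟩
  by_contra hba
  push_neg at hba
  have h0 := h2 b hba
  simp only [Set.mem_setOf_eq, h0, ENNReal.toReal_zero] at hb
  linarith

lemma aux_VaR_attained {p : ℝ} (hp0 : 0 < p) (hp1 : p ≤ 1) {Z : Ω → ℝ} (hZ : Measurable Z)
    {M : ℝ} (hnn : ∀ᵐ ω ∂P, 0 ≤ Z ω) (hM : ∀ᵐ ω ∂P, Z ω ≤ M) :
    0 ≤ VaR P p Z ∧ VaR P p Z ≤ M ∧ p ≤ (P {ω | Z ω ≤ VaR P p Z}).toReal := by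
  set S := {x : ℝ | p ≤ (P {ω | Z ω ≤ x}).toReal} with hS
  have hMS : M ∈ S := by
    have : P {ω | Z ω ≤ M} = 1 := by
      rw [← measure_univ (μ := P)]
      apply measure_congr
      rw [Filter.eventuallyEq_univ]
      exact hM.mono fun ω h => h
    simp [hS, this, hp1]
  have hSne : S.Nonempty := ⟨M, hMS⟩
  have hlb : ∀ b ∈ S, (0:ℝ) ≤ b := by
    intro b hb
    by_contra hb0
    push_neg at hb0
    have hsub : P {ω | Z ω ≤ b} = 0 := by
      have h0 : P {ω | ¬ 0 ≤ Z ω} = 0 := by rwa [← ae_iff]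
      refine measure_mono_null (fun ω hω => ?_) h0
      simp only [Set.mem_setOf_eq, not_le] at hω ⊢
      exact lt_of_le_of_lt hω hb0
    simp only [hS, Set.mem_setOf_eq, hsub, ENNReal.toReal_zero] at hb
    linarith
  have hbdd : BddBelow S := ⟨0, hlb⟩
  have h0v : 0 ≤ VaR P p Z := le_csInf hSne hlb
  have hvM : VaR P p Z ≤ M := csInf_le hbdd hMS
  refine ⟨h0v, hvM, ?_⟩
  set v := VaR P p Z with hv
  have hup : ∀ x, v < x → p ≤ (P {ω | Z ω ≤ x}).toReal := by
    intro x hx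
    obtain ⟨s, hsS, hsx⟩ := exists_lt_of_csInf_lt hSne hx
    have : P {ω | Z ω ≤ s} ≤ P {ω | Z ω ≤ x} :=
      measure_mono fun ω hω => le_trans hω hsx.le
    calc p ≤ (P {ω | Z ω ≤ s}).toReal := hsS
    _ ≤ (P {ω | Z ω ≤ x}).toReal := ENNReal.toReal_mono (measure_ne_top _ _) this
  have hmeas : ∀ x : ℝ, MeasurableSet {ω | Z ω ≤ x} := fun x => hZ measurableSet_Iic
  have hiInter : {ω | Z ω ≤ v} = ⋂ n : ℕ, {ω | Z ω ≤ v + ((n:ℝ)+1)⁻¹} := by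
    ext ω
    simp only [Set.mem_setOf_eq, Set.mem_iInter]
    constructor
    · intro h n
      have : (0:ℝ) < ((n:ℝ)+1)⁻¹ := by positivity
      linarith
    · intro h
      by_contra hlt
      push_neg at hlt
      obtain ⟨n, hn⟩ := exists_nat_one_div_lt (show (0:ℝ) < Z ω - v by linarith)
      have := h n
      rw [one_div] at hn
      linarith
  have hanti : Antitone fun n : ℕ => {ω | Z ω ≤ v + ((n:ℝ)+1)⁻¹} := by
    intro a b hab ω hω
    simp only [Set.mem_setOf_eq] at hω ⊢
    have hab' : ((a:ℝ)) ≤ (b:ℝ) := Nat.cast_le.mpr hab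
    have : ((b:ℝ)+1)⁻¹ ≤ ((a:ℝ)+1)⁻¹ := by
      apply inv_anti₀ (by positivity)
      linarith
    linarith
  have hmi := Directed.measure_iInter (μ := P)
      (fun n : ℕ => (hmeas _).nullMeasurableSet)
      (hanti.directed_ge) ⟨0, measure_ne_top _ _⟩
  have hge : ENNReal.ofReal p ≤ P {ω | Z ω ≤ v} := by
    rw [hiInter, hmi]
    refine le_iInf fun n => ?_
    exact ENNReal.ofReal_le_of_le_toReal (hup _ (lt_add_of_pos_right v (by positivity)))
  have := ENNReal.toReal_mono (measure_ne_top _ _) hge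
  rwa [ENNReal.toReal_ofReal hp0.le] at this

end AuxLemmas

set_option maxHeartbeats 1600000 in
theorem stmt8' {Ω : Type*} [MeasurableSpace Ω] (P : Measure Ω) [IsProbabilityMeasure P]
    (X : Ω → ℝ) (hXmeas : Measurable X)
    (γ : ℝ → ℝ) (hγcont : Continuous γ) (hγpos : ∀ x, 0 < γ x)
    (hγint : Integrable (fun ω => γ (X ω)) P)
    (hγ1 : ∫ ω, γ (X ω) ∂P = 1)
    (p : ℝ) (hp : p ∈ Set.Ioo (0 : ℝ) 1)
    (m : ℝ) (hm : 0 < m) (x₀ : ℝ) (hx₀ : 0 ≤ x₀) (hx₀lt : x₀ < m)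
    (q' : ℝ)
    (hq' : q' = sInf {v : ℝ | ∃ g : ℝ → ℝ, memGbd P X γ x₀ m g ∧ v = VaR P p (fun ω => g (X ω))})
    (hqpos : 0 < q')
    (c : ℝ)
    (hcont : (P {ω | γ (X ω) ≤ c}).toReal = p) :
    ∃ g : ℝ → ℝ, memGbd P X γ x₀ m g ∧ VaR P p (fun ω => g (X ω)) = q' ∧
      (∀ᵐ ω ∂P, g (X ω) = if c < γ (X ω) then m else q') ∧
      ∀ h : ℝ → ℝ, memGbd P X γ x₀ m h → VaR P p (fun ω => h (X ω)) = q' →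
        ∀ᵐ ω ∂P, h (X ω) = g (X ω) := by
  have hYmeas : Measurable fun ω => γ (X ω) := hγcont.measurable.comp hXmeas
  set B := {ω | γ (X ω) ≤ c} with hBdef
  have hBmeas : MeasurableSet B := hYmeas measurableSet_Iic
  set K := ∫ ω in B, γ (X ω) ∂P with hKdef
  have hK0 : 0 ≤ K := setIntegral_nonneg hBmeas fun ω _ => (hγpos _).le
  have hK1 : K ≤ 1 := by
    rw [hKdef, ← hγ1]
    exact setIntegral_le_integral hγint (Filter.Eventually.of_forall fun ω => (hγpos _).le)
  have hcpos : 0 < c := by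
    by_contra hc0
    push_neg at hc0
    have hBempty : B = ∅ := by
      ext ω
      simp only [hBdef, Set.mem_setOf_eq, Set.mem_empty_iff_false, iff_false, not_le]
      exact lt_of_le_of_lt hc0 (hγpos _)
    rw [hBdef] at hcont
    rw [show {ω | γ (X ω) ≤ c} = (∅ : Set Ω) from hBempty] at hcont
    simp at hcont
    linarith [hp.1, hcont]
  -- key comparison lemma
  have hkey : ∀ A : Set Ω, MeasurableSet A → p ≤ (P A).toReal →
      K ≤ ∫ ω in A, γ (X ω) ∂P ∧
      ((∫ ω in A, γ (X ω) ∂P) = K → P (A \ B) = 0 ∧ P (B \ A) = 0) := by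
    intro A hA hpA
    have hD1 : MeasurableSet (A \ B) := hA.diff hBmeas
    have hD2 : MeasurableSet (B \ A) := hBmeas.diff hA
    have hdisj1 : Disjoint (A ∩ B) (A \ B) := by
      rw [Set.disjoint_left]; rintro ω ⟨-, h1⟩ ⟨-, h2⟩; exact h2 h1
    have hdisj2 : Disjoint (B ∩ A) (B \ A) := by
      rw [Set.disjoint_left]; rintro ω ⟨-, h1⟩ ⟨-, h2⟩; exact h2 h1
    have hIA : ∫ ω in A, γ (X ω) ∂P
        = ∫ ω in A ∩ B, γ (X ω) ∂P + ∫ ω in A \ B, γ (X ω) ∂P := by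
      rw [← setIntegral_union hdisj1 hD1 hγint.integrableOn hγint.integrableOn,
        Set.inter_union_diff]
    have hIB : K = ∫ ω in A ∩ B, γ (X ω) ∂P + ∫ ω in B \ A, γ (X ω) ∂P := by
      rw [hKdef, Set.inter_comm A B,
        ← setIntegral_union hdisj2 hD2 hγint.integrableOn hγint.integrableOn,
        Set.inter_union_diff]
    have hPA : (P A).toReal = (P (A ∩ B)).toReal + (P (A \ B)).toReal := by
      have h := measure_inter_add_diff (μ := P) A hBmeas
      have := congrArg ENNReal.toReal h
      rwa [ENNReal.toReal_add (measure_ne_top _ _) (measure_ne_top _ _), eq_comm] at this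
    have hPB : (P B).toReal = (P (A ∩ B)).toReal + (P (B \ A)).toReal := by
      have h := measure_inter_add_diff (μ := P) B hA
      have := congrArg ENNReal.toReal h
      rw [ENNReal.toReal_add (measure_ne_top _ _) (measure_ne_top _ _), eq_comm,
        Set.inter_comm] at this
      exact this
    have hb1 : c * (P (A \ B)).toReal ≤ ∫ ω in A \ B, γ (X ω) ∂P := by
      have := setIntegral_mono_on (integrableOn_const (measure_ne_top P _))
        hγint.integrableOn hD1 (fun ω hω => (not_le.1 hω.2).le)
      rwa [setIntegral_const, smul_eq_mul, mul_comm] at this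
    have hb2 : ∫ ω in B \ A, γ (X ω) ∂P ≤ c * (P (B \ A)).toReal := by
      have := setIntegral_mono_on hγint.integrableOn
        (integrableOn_const (measure_ne_top P _)) hD2 (fun ω hω => hω.1)
      rwa [setIntegral_const, smul_eq_mul, mul_comm] at this
    have hPBp : (P B).toReal = p := hcont
    have hr : (P (A \ B)).toReal - (P (B \ A)).toReal = (P A).toReal - (P B).toReal := by
      linarith
    have hge0 : 0 ≤ c * ((P (A \ B)).toReal - (P (B \ A)).toReal) := by
      apply mul_nonneg hcpos.le
      rw [hr]; linarith
    rw [mul_sub] at hge0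
    constructor
    · linarith
    · intro heq
      have hr12 : (P (A \ B)).toReal = (P (B \ A)).toReal := by nlinarith [hcpos]
      have hintD1 : ∫ ω in A \ B, γ (X ω) ∂P = c * (P (A \ B)).toReal := by linarith
      have hD1zero : P (A \ B) = 0 := by
        by_contra hne
        have hpos : 0 < P (A \ B) := pos_iff_ne_zero.2 hne
        have hf : 0 < ∫ ω in A \ B, (γ (X ω) - c) ∂P := by
          rw [setIntegral_pos_iff_support_of_nonneg_ae]
          · refine lt_of_lt_of_le hpos (measure_mono fun ω hω => ?_)
            exact ⟨ne_of_gt (sub_pos.2 (not_le.1 hω.2)), hω⟩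
          · rw [EventuallyLE, ae_restrict_iff' hD1]
            exact Filter.Eventually.of_forall fun ω hω => sub_nonneg.2 (not_le.1 hω.2).le
          · exact (hγint.sub (integrable_const c)).integrableOn
        rw [integral_sub hγint.integrableOn
          (integrableOn_const (measure_ne_top P _)),
          setIntegral_const, smul_eq_mul, hintD1, measureReal_def] at hf
        nlinarith
      have hr1z : (P (A \ B)).toReal = 0 := by rw [hD1zero]; simp
      have hr2z : (P (B \ A)).toReal = 0 := by linarith
      refine ⟨hD1zero, ?_⟩
      rcases (ENNReal.toReal_eq_zero_iff _).1 hr2z with h | h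
      · exact h
      · exact absurd h (measure_ne_top _ _)
  -- two-valued functions: integral computation
  have hGsum : ∀ a b : ℝ, (fun ω => γ (X ω) * (if c < γ (X ω) then a else b))
      = fun ω => a * γ (X ω) + B.indicator (fun ω => (b - a) * γ (X ω)) ω := by
    intro a b
    funext ω
    by_cases hω : γ (X ω) ≤ c
    · have hmem : ω ∈ B := hω
      rw [Set.indicator_of_mem hmem, if_neg (not_lt.2 hω)]
      ring
    · have hmem : ω ∉ B := hω
      rw [Set.indicator_of_notMem hmem, if_pos (not_le.1 hω)]
      ring
  have hGint : ∀ a b : ℝ, Integrable (fun ω => γ (X ω) * (if c < γ (X ω) then a else b)) P := by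
    intro a b
    rw [hGsum]
    exact (hγint.const_mul a).add ((hγint.const_mul (b - a)).indicator hBmeas)
  have hGval : ∀ a b : ℝ, ∫ ω, γ (X ω) * (if c < γ (X ω) then a else b) ∂P
      = a + (b - a) * K := by
    intro a b
    rw [hGsum, integral_add (hγint.const_mul a) ((hγint.const_mul (b - a)).indicator hBmeas),
      integral_indicator hBmeas, integral_const_mul, integral_const_mul, hγ1, ← hKdef]
    ring
  -- VaR of two-valued functions
  have hVaRif : ∀ a b : ℝ, 0 ≤ b → b ≤ a →
      VaR P p (fun ω => if c < γ (X ω) then a else b) = b := by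
    intro a b hb0 hba
    apply aux_VaR_eq P hp.1
    · have hsub : B ⊆ {ω | (if c < γ (X ω) then a else b) ≤ b} := by
        intro ω hω
        have : ¬ c < γ (X ω) := not_lt.2 hω
        simp [this]
      calc p = (P B).toReal := hcont.symm
      _ ≤ _ := ENNReal.toReal_mono (measure_ne_top _ _) (measure_mono hsub)
    · intro x hx
      have : {ω | (if c < γ (X ω) then a else b) ≤ x} = (∅ : Set Ω) := by
        ext ω
        simp only [Set.mem_setOf_eq, Set.mem_empty_iff_false, iff_false, not_le]
        split
        · linarith
        · linarith
      rw [this, measure_empty]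
  -- the constant function x₀ is admissible
  have hconstmem : memGbd P X γ x₀ m (fun _ => x₀) := by
    refine ⟨measurable_const, hγint.mul_const x₀, ?_, ?_⟩
    · rw [integral_mul_const, hγ1]; simp
    · exact Filter.Eventually.of_forall fun ω => ⟨hx₀, hx₀lt.le⟩
  have hconstVaR : VaR P p (fun ω : Ω => x₀) = x₀ := by
    apply aux_VaR_eq P hp.1
    · have : {ω : Ω | x₀ ≤ x₀} = Set.univ := by simp
      rw [this, measure_univ]
      simp [hp.2.le]
    · intro x hx
      have : {ω : Ω | x₀ ≤ x} = (∅ : Set Ω) := by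
        ext ω; simp only [Set.mem_setOf_eq, Set.mem_empty_iff_false, iff_false, not_le]; exact hx
      rw [this, measure_empty]
  set V := {v : ℝ | ∃ g : ℝ → ℝ, memGbd P X γ x₀ m g ∧ v = VaR P p (fun ω => g (X ω))} with hVdef
  have hVne : V.Nonempty := ⟨x₀, (fun _ => x₀), hconstmem, hconstVaR.symm⟩
  have hVlb : ∀ v ∈ V, (0:ℝ) ≤ v := by
    rintro v ⟨g, ⟨hgm, hgint, hgbud, hgae⟩, rfl⟩
    exact (aux_VaR_attained P (Z := fun ω => g (X ω)) hp.1 hp.2.le (hgm.comp hXmeas)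
      (hgae.mono fun ω h => h.1) (hgae.mono fun ω h => h.2)).1
  have hVbdd : BddBelow V := ⟨0, hVlb⟩
  have hq'x₀ : q' ≤ x₀ := by
    rw [hq']
    exact csInf_le hVbdd ⟨(fun _ => x₀), hconstmem, hconstVaR.symm⟩
  have hq'm : q' < m := lt_of_le_of_lt hq'x₀ hx₀lt
  -- key budget inequality
  have hbudkey : ∀ g : ℝ → ℝ, memGbd P X γ x₀ m g →
      x₀ ≤ m + (VaR P p (fun ω => g (X ω)) - m) * K := by
    rintro g ⟨hgm, hgint, hgbud, hgae⟩
    obtain ⟨h0v, hvm, hpA⟩ := aux_VaR_attained P (Z := fun ω => g (X ω)) hp.1 hp.2.le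
      (hgm.comp hXmeas) (hgae.mono fun ω h => h.1) (hgae.mono fun ω h => h.2)
    set v := VaR P p (fun ω => g (X ω)) with hvdef
    have hpA : p ≤ (P {ω | g (X ω) ≤ v}).toReal := hpA
    set A := {ω | g (X ω) ≤ v} with hAdef
    have hA : MeasurableSet A := (hgm.comp hXmeas) measurableSet_Iic
    have hcmpA : K ≤ ∫ ω in A, γ (X ω) ∂P := (hkey A hA hpA).1
    set ψ := fun ω => m * γ (X ω) + A.indicator (fun ω => (v - m) * γ (X ω)) ω with hψdef
    have hψint : Integrable ψ P :=
      (hγint.const_mul m).add ((hγint.const_mul (v - m)).indicator hA)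
    have hle : ∀ᵐ ω ∂P, γ (X ω) * g (X ω) ≤ ψ ω := by
      refine hgae.mono fun ω hω => ?_
      by_cases hωA : ω ∈ A
      · have hgv : g (X ω) ≤ v := hωA
        have h1 : γ (X ω) * g (X ω) ≤ γ (X ω) * v :=
          mul_le_mul_of_nonneg_left hgv (hγpos _).le
        have h2 : ψ ω = m * γ (X ω) + (v - m) * γ (X ω) := by
          rw [hψdef]; simp [Set.indicator_of_mem hωA]
        rw [h2]; nlinarith
      · have h2 : ψ ω = m * γ (X ω) := by
          rw [hψdef]; simp [Set.indicator_of_notMem hωA]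
        rw [h2]
        have := mul_le_mul_of_nonneg_left hω.2 (hγpos (X ω)).le
        linarith
    have hIψ : ∫ ω, ψ ω ∂P = m + (v - m) * ∫ ω in A, γ (X ω) ∂P := by
      rw [hψdef, integral_add (hγint.const_mul m) ((hγint.const_mul (v - m)).indicator hA),
        integral_indicator hA, integral_const_mul, integral_const_mul, hγ1]
      ring
    have hchain : x₀ ≤ m + (v - m) * ∫ ω in A, γ (X ω) ∂P := by
      calc x₀ ≤ ∫ ω, γ (X ω) * g (X ω) ∂P := hgbud
      _ ≤ ∫ ω, ψ ω ∂P := integral_mono_ae hgint hψint hle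
      _ = _ := hIψ
    nlinarith [mul_nonneg (sub_nonneg.2 hvm) (sub_nonneg.2 hcmpA)]
  -- binding of the budget constraint
  set Istar := m + (q' - m) * K with hIstardef
  have hx₀leI : x₀ ≤ Istar := by
    have hstep : ∀ ε : ℝ, 0 < ε → x₀ ≤ Istar + ε := by
      intro ε hε
      have hlt : sInf V < q' + ε := by rw [← hq']; linarith
      obtain ⟨v, hvV, hvlt⟩ := exists_lt_of_csInf_lt hVne hlt
      obtain ⟨g, hg, hveq⟩ := hvV
      have h1 := hbudkey g hg
      rw [← hveq] at h1
      have hvm : v ≤ m := by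
        obtain ⟨hgm, hgint, hgbud, hgae⟩ := hg
        have := (aux_VaR_attained P (Z := fun ω => g (X ω)) hp.1 hp.2.le (hgm.comp hXmeas)
          (hgae.mono fun ω h => h.1) (hgae.mono fun ω h => h.2)).2.1
        rw [← hveq] at this; exact this
      nlinarith
    by_contra hcon
    push_neg at hcon
    have := hstep ((x₀ - Istar) / 2) (by linarith)
    linarith
  have hIleX : Istar ≤ x₀ := by
    by_contra hcon
    push_neg at hcon
    have hIq : q' ≤ Istar := by nlinarith
    have hIpos : 0 < Istar := lt_of_lt_of_le hqpos hIq
    set t := x₀ / Istar with htdef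
    have ht0 : 0 ≤ t := div_nonneg hx₀ hIpos.le
    have ht1 : t < 1 := (div_lt_one hIpos).2 hcon
    set gt := fun x : ℝ => t * (if c < γ x then m else q') with hgtdef
    have hgtmem : memGbd P X γ x₀ m gt := by
      refine ⟨measurable_const.mul (Measurable.ite
        (measurableSet_lt measurable_const hγcont.measurable)
        measurable_const measurable_const), ?_, ?_, ?_⟩
      · have heq : (fun ω => γ (X ω) * gt (X ω))
            = fun ω => t * (γ (X ω) * (if c < γ (X ω) then m else q')) := by
          funext ω; show γ (X ω) * (t * (if c < γ (X ω) then m else q')) = _; ring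
        rw [heq]
        exact (hGint m q').const_mul t
      · have heq : (fun ω => γ (X ω) * gt (X ω))
            = fun ω => t * (γ (X ω) * (if c < γ (X ω) then m else q')) := by
          funext ω; show γ (X ω) * (t * (if c < γ (X ω) then m else q')) = _; ring
        rw [heq, integral_const_mul, hGval m q', ← hIstardef, htdef,
          div_mul_cancel₀ x₀ (ne_of_gt hIpos)]
      · refine Filter.Eventually.of_forall fun ω => ?_
        constructor
        · show 0 ≤ t * (if c < γ (X ω) then m else q')
          apply mul_nonneg ht0
          split
          · exact hm.le
          · exact hqpos.le
        · show t * (if c < γ (X ω) then m else q') ≤ m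
          split <;> nlinarith
    have hgtVaR : VaR P p (fun ω => gt (X ω)) = t * q' := by
      have heq : (fun ω => gt (X ω)) = fun ω => if c < γ (X ω) then t * m else t * q' := by
        funext ω; show t * (if c < γ (X ω) then m else q') = _; rw [mul_ite]
      rw [heq]
      exact hVaRif (t * m) (t * q') (mul_nonneg ht0 hqpos.le)
        (mul_le_mul_of_nonneg_left hq'm.le ht0)
    have htq'V : t * q' ∈ V := ⟨gt, hgtmem, hgtVaR.symm⟩
    have : q' ≤ t * q' := by
      have h := csInf_le hVbdd htq'V
      rwa [← hq'] at h
    have h2 : t * q' < 1 * q' := mul_lt_mul_of_pos_right ht1 hqpos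
    rw [one_mul] at h2
    exact absurd this (not_le.2 h2)
  have hbind : m + (q' - m) * K = x₀ := le_antisymm hIleX hx₀leI
  -- the optimal solution
  set gstar := fun x : ℝ => if c < γ x then m else q' with hgstardef
  have hgstarmeas : Measurable gstar := Measurable.ite
    (measurableSet_lt measurable_const hγcont.measurable) measurable_const measurable_const
  have hgstarint : Integrable (fun ω => γ (X ω) * gstar (X ω)) P := hGint m q'
  have hgstarval : ∫ ω, γ (X ω) * gstar (X ω) ∂P = x₀ := by
    calc ∫ ω, γ (X ω) * gstar (X ω) ∂P = m + (q' - m) * K := hGval m q'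
    _ = x₀ := hbind
  have hgstarmem : memGbd P X γ x₀ m gstar := by
    refine ⟨hgstarmeas, hgstarint, le_of_eq hgstarval.symm,
      Filter.Eventually.of_forall fun ω => ?_⟩
    constructor
    · show 0 ≤ if c < γ (X ω) then m else q'
      split
      · exact hm.le
      · exact hqpos.le
    · show (if c < γ (X ω) then m else q') ≤ m
      split
      · exact le_refl m
      · exact hq'm.le
  have hgstarVaR : VaR P p (fun ω => gstar (X ω)) = q' := hVaRif m q' hqpos.le hq'm.le
  refine ⟨gstar, hgstarmem, hgstarVaR, Filter.Eventually.of_forall fun ω => rfl, ?_⟩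
  -- uniqueness
  intro h hmem hVaRh
  obtain ⟨hhm, hhint, hhbud, hhae⟩ := hmem
  obtain ⟨-, -, hpA0⟩ := aux_VaR_attained P (Z := fun ω => h (X ω)) hp.1 hp.2.le
    (hhm.comp hXmeas) (hhae.mono fun ω h' => h'.1) (hhae.mono fun ω h' => h'.2)
  rw [hVaRh] at hpA0
  set A := {ω | h (X ω) ≤ q'} with hAdef
  have hpA : p ≤ (P A).toReal := hpA0
  have hA : MeasurableSet A := (hhm.comp hXmeas) measurableSet_Iic
  have hcmpA : K ≤ ∫ ω in A, γ (X ω) ∂P := (hkey A hA hpA).1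
  set ψ := fun ω => m * γ (X ω) + A.indicator (fun ω => (q' - m) * γ (X ω)) ω with hψdef
  have hψint : Integrable ψ P :=
    (hγint.const_mul m).add ((hγint.const_mul (q' - m)).indicator hA)
  have hle : ∀ᵐ ω ∂P, γ (X ω) * h (X ω) ≤ ψ ω := by
    refine hhae.mono fun ω hω => ?_
    by_cases hωA : ω ∈ A
    · have hgv : h (X ω) ≤ q' := hωA
      have h1 : γ (X ω) * h (X ω) ≤ γ (X ω) * q' :=
        mul_le_mul_of_nonneg_left hgv (hγpos _).le
      have h2 : ψ ω = m * γ (X ω) + (q' - m) * γ (X ω) := by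
        simp only [hψdef, Set.indicator_of_mem hωA]
      rw [h2]; nlinarith
    · have h2 : ψ ω = m * γ (X ω) := by
        simp only [hψdef, Set.indicator_of_notMem hωA, add_zero]
      rw [h2]
      have := mul_le_mul_of_nonneg_left hω.2 (hγpos (X ω)).le
      linarith
  have hIψ : ∫ ω, ψ ω ∂P = m + (q' - m) * ∫ ω in A, γ (X ω) ∂P := by
    rw [hψdef, integral_add (hγint.const_mul m) ((hγint.const_mul (q' - m)).indicator hA),
      integral_indicator hA, integral_const_mul, integral_const_mul, hγ1]
    ring
  have h2' : ∫ ω, γ (X ω) * h (X ω) ∂P ≤ ∫ ω, ψ ω ∂P := integral_mono_ae hhint hψint hle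
  have h3' : m + (q' - m) * ∫ ω in A, γ (X ω) ∂P ≤ x₀ := by
    nlinarith [mul_nonneg (sub_nonneg.2 hq'm.le) (sub_nonneg.2 hcmpA)]
  have h5 : m + (q' - m) * ∫ ω in A, γ (X ω) ∂P = x₀ := by
    refine le_antisymm h3' ?_
    calc x₀ ≤ ∫ ω, γ (X ω) * h (X ω) ∂P := hhbud
    _ ≤ ∫ ω, ψ ω ∂P := h2'
    _ = _ := hIψ
  have hAeq : ∫ ω in A, γ (X ω) ∂P = K := by
    have hne : q' - m ≠ 0 := sub_ne_zero.2 (ne_of_lt hq'm)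
    have : (q' - m) * ∫ ω in A, γ (X ω) ∂P = (q' - m) * K := by linarith
    exact mul_left_cancel₀ hne this
  have h7 : ∫ ω, ψ ω ∂P = x₀ := by rw [hIψ, hAeq]; exact hbind
  have h6 : ∫ ω, γ (X ω) * h (X ω) ∂P = x₀ :=
    le_antisymm (h2'.trans (le_of_eq h7)) hhbud
  have hinteq : ∫ ω, (ψ ω - γ (X ω) * h (X ω)) ∂P = 0 := by
    rw [integral_sub hψint hhint, h7, h6]; ring
  have hdzero := (integral_eq_zero_iff_of_nonneg_ae
    (hle.mono fun ω hω => sub_nonneg.2 hω) (hψint.sub hhint)).1 hinteq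
  have hnull := (hkey A hA hpA).2 hAeq
  have hae1 : ∀ᵐ ω ∂P, ω ∉ A \ B := by
    rw [ae_iff]
    exact measure_mono_null (fun ω hω => not_not.mp hω) hnull.1
  have hae2 : ∀ᵐ ω ∂P, ω ∉ B \ A := by
    rw [ae_iff]
    exact measure_mono_null (fun ω hω => not_not.mp hω) hnull.2
  filter_upwards [hdzero, hae1, hae2] with ω hdω h1ω h2ω
  have hdd : ψ ω - γ (X ω) * h (X ω) = 0 := hdω
  by_cases hωB : γ (X ω) ≤ c
  · have hωA : ω ∈ A := by
      by_contra hx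
      exact h2ω ⟨hωB, hx⟩
    have hψω : ψ ω = γ (X ω) * q' := by
      simp only [hψdef, Set.indicator_of_mem hωA]; ring
    have heqω : γ (X ω) * h (X ω) = γ (X ω) * q' := by linarith
    have hfin := mul_left_cancel₀ (ne_of_gt (hγpos (X ω))) heqω
    rw [hfin]
    show q' = if c < γ (X ω) then m else q'
    rw [if_neg (not_lt.2 hωB)]
  · have hωA : ω ∉ A := by
      intro hx
      exact h1ω ⟨hx, hωB⟩
    have hψω : ψ ω = γ (X ω) * m := by
      simp only [hψdef, Set.indicator_of_notMem hωA, add_zero]; ring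
    have heqω : γ (X ω) * h (X ω) = γ (X ω) * m := by linarith
    have hfin := mul_left_cancel₀ (ne_of_gt (hγpos (X ω))) heqω
    rw [hfin]
    show m = if c < γ (X ω) then m else q'
    rw [if_pos (not_le.1 hωB)]


theorem stmt8 {Ω : Type*} [MeasurableSpace Ω] (P : Measure Ω) [IsProbabilityMeasure P]
    (hPatomless : Atomless P)
    (X : Ω → ℝ) (hXmeas : Measurable X) (hXnonneg : ∀ᵐ ω ∂P, 0 ≤ X ω)
    (hXdens : HasPositiveDensityOnSupport (Measure.map X P))
    (γ : ℝ → ℝ) (hγcont : Continuous γ) (hγpos : ∀ x, 0 < γ x)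
    (hγint : Integrable (fun ω => γ (X ω)) P)
    (hγ1 : ∫ ω, γ (X ω) ∂P = 1)
    (hγXint : Integrable (fun ω => γ (X ω) * X ω) P)
    (p : ℝ) (hp : p ∈ Set.Ioo (0 : ℝ) 1)
    (m : ℝ) (hm : 0 < m) (x₀ : ℝ) (hx₀ : 0 ≤ x₀) (hx₀lt : x₀ < m)
    (q' : ℝ)
    (hq' : q' = sInf {v : ℝ | ∃ g : ℝ → ℝ, memGbd P X γ x₀ m g ∧ v = VaR P p (fun ω => g (X ω))})
    (hqpos : 0 < q')
    (c : ℝ) (hc : c = VaR P p (fun ω => γ (X ω)))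
    (hcont : (P {ω | γ (X ω) ≤ c}).toReal = p) :
    ∃ g : ℝ → ℝ, memGbd P X γ x₀ m g ∧ VaR P p (fun ω => g (X ω)) = q' ∧
      (∀ᵐ ω ∂P, g (X ω) = if c < γ (X ω) then m else q') ∧
      ∀ h : ℝ → ℝ, memGbd P X γ x₀ m h → VaR P p (fun ω => h (X ω)) = q' →
        ∀ᵐ ω ∂P, h (X ω) = g (X ω) := by
  exact stmt8' P X hXmeas γ hγcont hγpos hγint hγ1 p hp m hm x₀ hx₀ hx₀lt q' hq' hqpos c hcont
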